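/- Let s1, s2, s3 be elements of a field of characteristic ≠ 2 with s1^2 - 3*s2 ≠ 0 and x1, x2, x3 the roots of X^3 - s1*X^2 + s2*X - s3 with Δ = (x2-x1)(x3-x1)(x3-x2) ≠ 0. Then for each i, x_i = (-Δ + s1*s2 - 9*s3 - 2*Δ*z_i)/(2*(s1^2 - 3*s2)) where z1 = (x1-x2)/(x2-x3), z2 = (x2-x3)/(x3-x1), z3 = (x3-x1)/(x1-x2); equivalently z_i = -(Δ - s1*s2 + 9*s3)/(2Δ) - (s1^2-3*s2)*x_i/Δ. -/

import Mathlib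

theorem stmt19 {K : Type*} [Field K] (hchar : ringChar K ≠ 2)
    (x1 x2 x3 : K) (h12 : x1 ≠ x2) (h13 : x1 ≠ x3) (h23 : x2 ≠ x3)
    (s1 s2 s3 Δ z1 z2 z3 : K)
    (hs1 : s1 = x1 + x2 + x3) (hs2 : s2 = x1 * x2 + x1 * x3 + x2 * x3)
    (hs3 : s3 = x1 * x2 * x3)
    (hΔ : Δ = (x2 - x1) * (x3 - x1) * (x3 - x2)) (hΔ0 : Δ ≠ 0)
    (hA : s1 ^ 2 - 3 * s2 ≠ 0)
    (hz1 : z1 = (x1 - x2) / (x2 - x3)) (hz2 : z2 = (x2 - x3) / (x3 - x1))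
    (hz3 : z3 = (x3 - x1) / (x1 - x2)) :
    x1 = (-Δ + s1 * s2 - 9 * s3 - 2 * Δ * z1) / (2 * (s1 ^ 2 - 3 * s2)) ∧
      x2 = (-Δ + s1 * s2 - 9 * s3 - 2 * Δ * z2) / (2 * (s1 ^ 2 - 3 * s2)) ∧
      x3 = (-Δ + s1 * s2 - 9 * s3 - 2 * Δ * z3) / (2 * (s1 ^ 2 - 3 * s2)) ∧
      z1 = -(Δ - s1 * s2 + 9 * s3) / (2 * Δ) - (s1 ^ 2 - 3 * s2) * x1 / Δ ∧
      z2 = -(Δ - s1 * s2 + 9 * s3) / (2 * Δ) - (s1 ^ 2 - 3 * s2) * x2 / Δ ∧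
      z3 = -(Δ - s1 * s2 + 9 * s3) / (2 * Δ) - (s1 ^ 2 - 3 * s2) * x3 / Δ := by

  have h2 : (2:K) ≠ 0 := by
    intro h; exact hchar (CharP.ringChar_of_prime_eq_zero Nat.prime_two (by exact_mod_cast h))
  have d12 : x1 - x2 ≠ 0 := sub_ne_zero.mpr h12
  have d13 : x3 - x1 ≠ 0 := sub_ne_zero.mpr (Ne.symm h13)
  have d23 : x2 - x3 ≠ 0 := sub_ne_zero.mpr h23
  subst hs1 hs2 hs3 hΔ hz1 hz2 hz3
  have hA2 : 2 * ((x1 + x2 + x3) ^ 2 - 3 * (x1 * x2 + x1 * x3 + x2 * x3)) ≠ 0 := mul_ne_zero h2 hA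
  have hD2 : 2 * ((x2 - x1) * (x3 - x1) * (x3 - x2)) ≠ 0 := mul_ne_zero h2 hΔ0
  refine ⟨?_, ?_, ?_, ?_, ?_, ?_⟩
  all_goals first
    | (rw [eq_div_iff hA2]; field_simp; ring)
    | (rw [div_sub_div _ _ hD2 hΔ0, eq_div_iff (mul_ne_zero hD2 hΔ0)]; field_simp; ring)
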